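/- arXiv:2401.09017 — 4 statements merged into one kernel-verified Lean document; each statement's English description precedes it below -/
import Mathlib

section
/- Let n ≥ 3 be an integer, let (ξ, η) ∈ ℝ × ℝ^{n-1} with (ξ, η) ≠ (0, 0), and let ε > 0. Suppose v₀ ∈ ℝ and v' ∈ ℝ^{n-1} are such that for every S ∈ ℝ with |S| < ε and every Y ∈ ℝ^{n-1} with |Y| = 1 and ξ·S + ⟨η, Y⟩ = 0, the two equations v₀ − S·⟨Y, v'⟩ = 0 and −S·v₀·Y + v' + (S² − 1)·⟨Y, v'⟩·Y = 0 hold. Then v₀ = 0 and v' = 0. -/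
open scoped RealInnerProductSpace

lemma aux_exists_unit_orth {m : ℕ} (hm : 2 ≤ m) (η : EuclideanSpace ℝ (Fin m)) :
    ∃ f : EuclideanSpace ℝ (Fin m), ‖f‖ = 1 ∧ ⟪η, f⟫ = 0 := by
  by_cases hη : η = 0
  · refine ⟨EuclideanSpace.single ⟨0, by omega⟩ 1, ?_, by simp [hη]⟩
    simp [EuclideanSpace.norm_single]
  · have hfin : Module.finrank ℝ (EuclideanSpace ℝ (Fin m)) = m := finrank_euclideanSpace_fin
    have h1 : Module.finrank ℝ (ℝ ∙ η) = 1 := finrank_span_singleton hη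
    have h2 : Module.finrank ℝ (ℝ ∙ η) + Module.finrank ℝ ((ℝ ∙ η)ᗮ) = m := by
      rw [Submodule.finrank_add_finrank_orthogonal, hfin]
    have hpos : 0 < Module.finrank ℝ ((ℝ ∙ η)ᗮ) := by omega
    have hne : ((ℝ ∙ η)ᗮ : Submodule ℝ (EuclideanSpace ℝ (Fin m))) ≠ ⊥ := by
      intro hb
      rw [hb] at hpos
      simp at hpos
    obtain ⟨x, hx, hx0⟩ := Submodule.exists_mem_ne_zero_of_ne_bot hne
    have hinner : ⟪η, x⟫ = 0 :=
      (Submodule.mem_orthogonal _ x).mp hx η (Submodule.mem_span_singleton_self η)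
    refine ⟨‖x‖⁻¹ • x, ?_, ?_⟩
    · simp [norm_smul, norm_ne_zero_iff.mpr hx0]
    · rw [inner_smul_right, hinner, mul_zero]

theorem stmt_0 (n : ℕ) (hn : 3 ≤ n)
    (ξ : ℝ) (η : EuclideanSpace ℝ (Fin (n - 1)))
    (hξη : ¬(ξ = 0 ∧ η = 0))
    (ε : ℝ) (hε : 0 < ε)
    (v₀ : ℝ) (v' : EuclideanSpace ℝ (Fin (n - 1)))
    (h : ∀ S : ℝ, |S| < ε → ∀ Y : EuclideanSpace ℝ (Fin (n - 1)), ‖Y‖ = 1 →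
      ξ * S + ⟪η, Y⟫ = 0 →
      v₀ - S * ⟪Y, v'⟫ = 0 ∧
      (-(S * v₀)) • Y + v' + ((S ^ 2 - 1) * ⟪Y, v'⟫) • Y = 0) :
    v₀ = 0 ∧ v' = 0 := by
  have hm : 2 ≤ n - 1 := by omega
  by_cases hξ : ξ = 0
  · -- ξ = 0 : use a fixed unit Y ⊥ η with S = 0 and S = ε/2
    obtain ⟨f, hf1, hfη⟩ := aux_exists_unit_orth hm η
    have h0 := h 0 (by simpa using hε) f hf1 (by simp [hξ, hfη])
    have hv₀ : v₀ = 0 := by simpa using h0.1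
    have hS := h (ε/2) (by rw [abs_of_pos (by linarith)]; linarith) f hf1
      (by simp [hξ, hfη])
    have hfv : ⟪f, v'⟫ = 0 := by
      have h1 := hS.1
      rw [hv₀] at h1
      have hε' : (ε/2) ≠ 0 := by positivity
      rw [zero_sub, neg_eq_zero, mul_eq_zero] at h1
      tauto
    refine ⟨hv₀, ?_⟩
    have h2 := h0.2
    rw [hv₀, hfv] at h2
    simpa using h2
  · by_cases hη : η = 0
    · -- η = 0 : use S = 0 and unit Y ⊥ v'
      obtain ⟨f, hf1, hfv⟩ := aux_exists_unit_orth hm v'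
      have h0 := h 0 (by simpa using hε) f hf1 (by simp [hη])
      have hv₀ : v₀ = 0 := by simpa using h0.1
      refine ⟨hv₀, ?_⟩
      have h2 := h0.2
      rw [real_inner_comm f v'] at hfv
      rw [hv₀, hfv] at h2
      simpa using h2
    · -- ξ ≠ 0, η ≠ 0
      obtain ⟨f, hf1, hfη⟩ := aux_exists_unit_orth hm η
      -- step A : S = 0, Y = f
      have h0 := h 0 (by simpa using hε) f hf1 (by simp [hξ, hfη])
      have hv₀ : v₀ = 0 := by simpa using h0.1
      set a : ℝ := ⟪f, v'⟫ with ha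
      have hv' : v' = a • f := by
        have h2 := h0.2
        rw [hv₀] at h2
        simp only [mul_zero, neg_zero, zero_smul, zero_add, ne_eq, zero_pow, zero_sub] at h2
        have : v' + (-1 * a) • f = 0 := by simpa using h2
        rw [neg_one_mul, neg_smul, ← sub_eq_add_neg, sub_eq_zero] at this
        exact this
      -- step B : small S ≠ 0 with tilted Y
      have hηn : 0 < ‖η‖ := norm_pos_iff.mpr hη
      obtain ⟨e, he1, hηe, hef⟩ :
          ∃ e : EuclideanSpace ℝ (Fin (n - 1)), ‖e‖ = 1 ∧ ⟪η, e⟫ = ‖η‖ ∧ ⟪e, f⟫ = 0 := by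
        refine ⟨‖η‖⁻¹ • η, ?_, ?_, ?_⟩
        · rw [norm_smul]
          simp [abs_of_pos (inv_pos.mpr hηn), inv_mul_cancel₀ hηn.ne']
        · rw [inner_smul_right, real_inner_self_eq_norm_sq]
          field_simp
        · rw [inner_smul_left]
          simp [hfη]
      obtain ⟨t, ht0, ht1, htS⟩ : ∃ t : ℝ, 0 < t ∧ t < 1 ∧ |(-(t * ‖η‖) / ξ)| < ε := by
        refine ⟨min (1/2) (ε * |ξ| / (2 * ‖η‖)), lt_min (by norm_num) (by positivity),
          lt_of_le_of_lt (min_le_left _ _) (by norm_num), ?_⟩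
        have h2 : min (1/2) (ε * |ξ| / (2 * ‖η‖)) ≤ ε * |ξ| / (2 * ‖η‖) := min_le_right _ _
        have ht0' : 0 < min (1/2) (ε * |ξ| / (2 * ‖η‖)) := lt_min (by norm_num) (by positivity)
        rw [abs_div, abs_neg, abs_mul, abs_of_pos ht0', abs_of_pos hηn,
          div_lt_iff₀ (abs_pos.mpr hξ)]
        have h3 : ε * |ξ| / (2 * ‖η‖) * ‖η‖ = ε * |ξ| / 2 := by
          field_simp
        nlinarith [mul_le_mul_of_nonneg_right h2 hηn.le, abs_pos.mpr hξ]
      obtain ⟨r, hr0, hr2⟩ : ∃ r : ℝ, 0 < r ∧ r ^ 2 = 1 - t ^ 2 := by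
        have htr : (0:ℝ) < 1 - t ^ 2 := by nlinarith
        exact ⟨Real.sqrt (1 - t ^ 2), Real.sqrt_pos.mpr htr, Real.sq_sqrt htr.le⟩
      have hfe : ⟪f, e⟫ = 0 := by rw [real_inner_comm]; exact hef
      have hYf : ⟪r • f + t • e, f⟫ = r := by
        rw [inner_add_left, inner_smul_left, inner_smul_left, hef,
          real_inner_self_eq_norm_sq, hf1]
        simp
      have hYnorm : ‖r • f + t • e‖ = 1 := by
        have hsq : ‖r • f + t • e‖ ^ 2 = 1 := by
          rw [norm_add_sq_real, inner_smul_left, inner_smul_right, hfe, norm_smul, norm_smul,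
            hf1, he1]
          simp only [mul_one, mul_zero, Real.norm_eq_abs]
          rw [abs_of_pos hr0, abs_of_pos ht0]
          nlinarith
        rw [← Real.sqrt_sq (norm_nonneg (r • f + t • e)), hsq, Real.sqrt_one]
      have hconstr : ξ * (-(t * ‖η‖) / ξ) + ⟪η, r • f + t • e⟫ = 0 := by
        rw [inner_add_right, inner_smul_right, inner_smul_right, hfη, hηe, mul_zero,
          zero_add, mul_comm ξ _, div_mul_cancel₀ _ hξ]
        ring
      have hSne : (-(t * ‖η‖) / ξ) ≠ 0 := by
        apply div_ne_zero _ hξ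
        simp only [neg_ne_zero]
        positivity
      have heq1 := (h (-(t * ‖η‖) / ξ) htS (r • f + t • e) hYnorm hconstr).1
      rw [hv₀, hv', inner_smul_right, hYf] at heq1
      have ha0 : a = 0 := by
        have hz : (-(t * ‖η‖) / ξ) * (a * r) = 0 := by linarith
        rcases mul_eq_zero.mp hz with h' | h'
        · exact absurd h' hSne
        · rcases mul_eq_zero.mp h' with h'' | h''
          · exact h''
          · exact absurd h'' hr0.ne'
      refine ⟨hv₀, ?_⟩
      rw [hv', ha0, zero_smul]
end

section
/- Let n ≥ 3 be an integer, ξ ∈ ℝ, and η ∈ ℝ^{n-1}. Suppose v_x ∈ ℂ and v_y ∈ ℂ^{n-1} satisfy, for every Y ∈ ℝ^{n-1} with |Y| = 1, the two equations v_x + (ξ − i)·(⟨Y, η⟩/(ξ² + 1))·⟨Y, v_y⟩ = 0 and (ξ + i)·(⟨Y, η⟩/(ξ² + 1))·v_x·Y + v_y + ((⟨Y, η⟩²/(ξ² + 1)) − 1)·⟨Y, v_y⟩·Y = 0, where Y is regarded as a vector in ℂ^{n-1}. Then v_x = 0 and v_y = 0. -/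
open scoped RealInnerProductSpace
open Complex

/-- The pairing `⟨Y, v⟩ = ∑ j, Y j * v j` of a real vector `Y` with a complex vector `v`. -/
noncomputable def cpair {m : ℕ} (Y : EuclideanSpace ℝ (Fin m))
    (v : EuclideanSpace ℂ (Fin m)) : ℂ :=
  ∑ j, (Y j : ℂ) * v j

/-- A real vector regarded as a complex vector. -/
noncomputable def toC {m : ℕ} (Y : EuclideanSpace ℝ (Fin m)) :
    EuclideanSpace ℂ (Fin m) :=
  WithLp.toLp 2 (fun j => (Y j : ℂ))

theorem stmt_2 (n : ℕ) (hn : 3 ≤ n)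
    (ξ : ℝ) (η : EuclideanSpace ℝ (Fin (n - 1)))
    (v_x : ℂ) (v_y : EuclideanSpace ℂ (Fin (n - 1)))
    (h : ∀ Y : EuclideanSpace ℝ (Fin (n - 1)), ‖Y‖ = 1 →
      v_x + ((ξ : ℂ) - I) * ((⟪Y, η⟫ / (ξ ^ 2 + 1) : ℝ) : ℂ) * cpair Y v_y = 0 ∧
      (((ξ : ℂ) + I) * ((⟪Y, η⟫ / (ξ ^ 2 + 1) : ℝ) : ℂ) * v_x) • toC Y + v_y
        + ((((⟪Y, η⟫ ^ 2 / (ξ ^ 2 + 1) : ℝ) : ℂ) - 1) * cpair Y v_y) • toC Y = 0) :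
    v_x = 0 ∧ v_y = 0 := by
  have hs : (ξ ^ 2 + 1 : ℝ) ≠ 0 := by positivity
  have hmul : ((ξ : ℂ) + I) * ((ξ : ℂ) - I) = ((ξ ^ 2 + 1 : ℝ) : ℂ) := by
    push_cast
    linear_combination -Complex.I_sq
  have key : ∀ Y : EuclideanSpace ℝ (Fin (n - 1)), ‖Y‖ = 1 →
      ∀ j, v_y j = (cpair Y v_y) * ((Y j : ℝ) : ℂ) := by
    intro Y hY j
    obtain ⟨h1, h2⟩ := h Y hY
    set r : ℝ := ⟪Y, η⟫ with hr
    set c : ℂ := cpair Y v_y with hcdef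
    have hvx : v_x = -(((ξ : ℂ) - I) * ((r / (ξ ^ 2 + 1) : ℝ) : ℂ) * c) := by
      linear_combination h1
    have hq : ((ξ ^ 2 + 1 : ℝ) : ℂ) * ((r / (ξ ^ 2 + 1) : ℝ) : ℂ) ^ 2
        = ((r ^ 2 / (ξ ^ 2 + 1) : ℝ) : ℂ) := by
      have : (ξ ^ 2 + 1) * (r / (ξ ^ 2 + 1)) ^ 2 = r ^ 2 / (ξ ^ 2 + 1) := by
        field_simp
      exact_mod_cast congrArg (Complex.ofReal) this
    have hc : ((ξ : ℂ) + I) * ((r / (ξ ^ 2 + 1) : ℝ) : ℂ) * v_x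
        + ((((r ^ 2 / (ξ ^ 2 + 1)) : ℝ) : ℂ) - 1) * c = -c := by
      rw [hvx]
      linear_combination (-(((r / (ξ ^ 2 + 1) : ℝ) : ℂ)) ^ 2 * c) * hmul - c * hq
    have h2j := congrArg (fun v => v j) h2
    simp only [PiLp.add_apply, PiLp.smul_apply, PiLp.zero_apply, toC, PiLp.toLp_apply, smul_eq_mul] at h2j
    linear_combination h2j - ((Y j : ℝ) : ℂ) * hc
  have hm : 2 ≤ n - 1 := by omega
  set i0 : Fin (n - 1) := ⟨0, by omega⟩
  set i1 : Fin (n - 1) := ⟨1, by omega⟩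
  have hne : i0 ≠ i1 := by simp [i0, i1, Fin.ext_iff]
  have hY1 : ‖(EuclideanSpace.single i0 (1 : ℝ))‖ = 1 := by
    rw [EuclideanSpace.norm_single]; norm_num
  have hY2 : ‖(EuclideanSpace.single i1 (1 : ℝ))‖ = 1 := by
    rw [EuclideanSpace.norm_single]; norm_num
  have hc1 : ∀ v : EuclideanSpace ℂ (Fin (n - 1)), ∀ i : Fin (n - 1),
      cpair (EuclideanSpace.single i (1 : ℝ)) v = v i := by
    intro v i
    simp [cpair, EuclideanSpace.single_apply, apply_ite]
  have k2 := key (EuclideanSpace.single i1 (1 : ℝ)) hY2 i0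
  rw [EuclideanSpace.single_apply, if_neg hne] at k2
  simp only [Complex.ofReal_zero, mul_zero] at k2
  -- k2 : v_y i0 = 0
  have k1 : ∀ j, v_y j = 0 := by
    intro j
    have := key (EuclideanSpace.single i0 (1 : ℝ)) hY1 j
    rw [hc1, k2] at this
    simpa using this
  have hvy : v_y = 0 := PiLp.ext k1
  refine ⟨?_, hvy⟩
  have h1 := (h (EuclideanSpace.single i0 (1 : ℝ)) hY1).1
  rw [hc1, k1 i0] at h1
  simpa using h1
end

section
/- Let n ≥ 2 be an integer, ξ ∈ ℝ, η ∈ ℝ^{n-1}, and Y ∈ ℝ^{n-1} with |Y| = 1; set c = ⟨Y, η⟩/(ξ² + 1). Then for all v_x ∈ ℂ and v_y ∈ ℂ^{n-1}: |v_x|² + 2·Re((ξ − i)·c·conj(v_x)·⟨Y, v_y⟩) + |v_y|² + (c²·(ξ² + 1) − 1)·|⟨Y, v_y⟩|² ≥ 0. Equivalently, the Hermitian block matrix [[1, (ξ − i)·c·Yᵀ], [(ξ + i)·c·Y, Id + (c²·(ξ² + 1) − 1)·Y·Yᵀ]] acting on ℂ × ℂ^{n-1} is positive semidefinite. -/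
open scoped RealInnerProductSpace ComplexConjugate
open Complex

lemma cpair_norm_le {m : ℕ} (Y : EuclideanSpace ℝ (Fin m)) (hY : ‖Y‖ = 1)
    (v : EuclideanSpace ℂ (Fin m)) : ‖cpair Y v‖ ≤ ‖v‖ := by
  set w : EuclideanSpace ℂ (Fin m) := WithLp.toLp 2 (fun j => (Y j : ℂ)) with hw
  have hpair : cpair Y v = inner ℂ w v := by
    simp [cpair, PiLp.inner_apply, hw, mul_comm]
  have hwn : ‖w‖ = 1 := by
    have h1 : ‖w‖ = Real.sqrt (∑ j, ‖(Y j : ℂ)‖ ^ 2) := EuclideanSpace.norm_eq w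
    have h2 : ‖Y‖ = Real.sqrt (∑ j, ‖Y j‖ ^ 2) := EuclideanSpace.norm_eq Y
    simp only [Complex.norm_real] at h1
    rw [h1, ← h2, hY]
  calc ‖cpair Y v‖ = ‖(inner ℂ w v : ℂ)‖ := by rw [hpair]
    _ ≤ ‖w‖ * ‖v‖ := norm_inner_le_norm w v
    _ = ‖v‖ := by rw [hwn, one_mul]

theorem stmt_3 (n : ℕ) (hn : 2 ≤ n)
    (ξ : ℝ) (η : EuclideanSpace ℝ (Fin (n - 1)))
    (Y : EuclideanSpace ℝ (Fin (n - 1))) (hY : ‖Y‖ = 1)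
    (c : ℝ) (hc : c = ⟪Y, η⟫ / (ξ ^ 2 + 1))
    (v_x : ℂ) (v_y : EuclideanSpace ℂ (Fin (n - 1))) :
    0 ≤ ‖v_x‖ ^ 2 + 2 * (((ξ : ℂ) - I) * (c : ℂ) * conj v_x * cpair Y v_y).re
        + ‖v_y‖ ^ 2 + (c ^ 2 * (ξ ^ 2 + 1) - 1) * ‖cpair Y v_y‖ ^ 2 := by
  set p := cpair Y v_y with hp
  set z : ℂ := ((ξ : ℂ) - I) * (c : ℂ) * conj v_x * p with hz
  have hpv : ‖p‖ ≤ ‖v_y‖ := cpair_norm_le Y hY v_y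
  have habs : ‖z‖ = Real.sqrt (ξ ^ 2 + 1) * |c| * ‖v_x‖ * ‖p‖ := by
    have h1 : ‖(ξ : ℂ) - I‖ = Real.sqrt (ξ ^ 2 + 1) := by
      rw [Complex.norm_def, Complex.normSq_apply]
      simp
      ring_nf
    rw [hz]
    simp only [norm_mul, h1, Complex.norm_real, Real.norm_eq_abs, RCLike.norm_conj]
  have hre : -(‖z‖) ≤ z.re := by
    have h := Complex.abs_re_le_norm z
    linarith [neg_abs_le z.re]
  have hs : Real.sqrt (ξ ^ 2 + 1) ^ 2 = ξ ^ 2 + 1 := by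
    apply Real.sq_sqrt; positivity
  have hpnn : 0 ≤ ‖p‖ := norm_nonneg p
  have hvnn : 0 ≤ ‖v_x‖ := norm_nonneg v_x
  have hsq : 0 ≤ (‖v_x‖ - Real.sqrt (ξ ^ 2 + 1) * |c| * ‖p‖) ^ 2 := sq_nonneg _
  have hc2 : |c| ^ 2 = c ^ 2 := sq_abs c
  have hk : (Real.sqrt (ξ ^ 2 + 1) * |c|) ^ 2 = c ^ 2 * (ξ ^ 2 + 1) := by
    rw [mul_pow, hs, hc2]; ring
  nlinarith [hsq, mul_nonneg (sub_nonneg.mpr hpv) (add_nonneg (norm_nonneg v_y) hpnn)]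
end

section
/- Let τ > 0, c₁ > 0, and let x : [0, τ] → ℝ be differentiable with x(t) > 0 and x'(t) ≤ −c₁ for all t ∈ [0, τ]. Then for every s ∈ [0, τ] and every F > 0: ∫₀^s exp(−2F·(1/x(s) − 1/x(t)))·x(t)^{−2} dt ≤ 1/(2·c₁·F). -/
open Real

theorem stmt_8 (τ c₁ : ℝ) (hτ : 0 < τ) (hc₁ : 0 < c₁)
    (x : ℝ → ℝ)
    (hpos : ∀ t ∈ Set.Icc (0 : ℝ) τ, 0 < x t)
    (hdiff : ∀ t ∈ Set.Icc (0 : ℝ) τ, DifferentiableAt ℝ x t)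
    (hderiv : ∀ t ∈ Set.Icc (0 : ℝ) τ, deriv x t ≤ -c₁) :
    ∀ s ∈ Set.Icc (0 : ℝ) τ, ∀ F : ℝ, 0 < F →
      (∫ t in (0 : ℝ)..s, Real.exp (-2 * F * (1 / x s - 1 / x t)) / (x t) ^ 2)
        ≤ 1 / (2 * c₁ * F) := by
  intro s hs F hF
  obtain ⟨hs0, hsτ⟩ := hs
  set f : ℝ → ℝ := fun t => Real.exp (-2 * F * (1 / x s - 1 / x t)) / (x t) ^ 2 with hfdef
  set G : ℝ → ℝ := fun t => Real.exp (2 * F * (1 / x t)) with hGdef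
  set c : ℝ := Real.exp (-2 * F * (1 / x s)) / (2 * c₁ * F) with hcdef
  have h2cF : (0 : ℝ) < 2 * c₁ * F := by positivity
  have hcpos : 0 < c := by
    rw [hcdef]; positivity
  -- continuity of f at each point of [0, τ]
  have hcf : ∀ t ∈ Set.Icc (0 : ℝ) τ, ContinuousAt f t := by
    intro t ht
    have hxc := (hdiff t ht).continuousAt
    have hxne : x t ≠ 0 := (hpos t ht).ne'
    have h1 : ContinuousAt (fun r => 1 / x r) t := continuousAt_const.div hxc hxne
    have h2 : ContinuousAt (fun r => Real.exp (-2 * F * (1 / x s - 1 / x r))) t :=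
      Real.continuous_exp.continuousAt.comp ((continuousAt_const.sub h1).const_mul _)
    exact h2.div (hxc.pow 2) (pow_ne_zero _ hxne)
  have hcfIcc : ContinuousOn f (Set.Icc 0 s) := fun t ht =>
    (hcf t ⟨ht.1, ht.2.trans hsτ⟩).continuousWithinAt
  have hfint : ∀ r ∈ Set.Icc (0 : ℝ) s, IntervalIntegrable f MeasureTheory.volume 0 r := by
    intro r hr
    apply (hcfIcc.mono ?_).intervalIntegrable
    rw [Set.uIcc_of_le hr.1]
    exact Set.Icc_subset_Icc le_rfl hr.2
  have hGderiv : ∀ t ∈ Set.Icc (0 : ℝ) τ,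
      HasDerivAt G (G t * (2 * F * (-(deriv x t) / (x t) ^ 2))) t := by
    intro t ht
    have hx := (hdiff t ht).hasDerivAt
    have hinv : HasDerivAt (fun r => (x r)⁻¹) (-(deriv x t) / (x t) ^ 2) t :=
      hx.inv (hpos t ht).ne'
    have h2 : HasDerivAt (fun r => 2 * F * (x r)⁻¹) (2 * F * (-(deriv x t) / (x t) ^ 2)) t :=
      hinv.const_mul _
    have h3 := h2.exp
    have h4 : (fun r => Real.exp (2 * F * (x r)⁻¹)) = G := by
      funext r; rw [hGdef]; simp [one_div]
    rw [h4] at h3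
    convert h3 using 1
    rw [hGdef]; simp [one_div]
  set H : ℝ → ℝ := fun r => (∫ t in (0 : ℝ)..r, f t) - c * (G r - G 0) with hHdef
  -- the key pointwise derivative computation for H
  have key : ∀ r ∈ Set.Ioo (0 : ℝ) s,
      HasDerivAt H (f r - c * (G r * (2 * F * (-(deriv x r) / (x r) ^ 2)))) r := by
    intro r hr
    have hrτ : r ∈ Set.Icc (0 : ℝ) τ := ⟨hr.1.le, hr.2.le.trans hsτ⟩
    have hIoo : r ∈ Set.Ioo (0 : ℝ) τ := ⟨hr.1, lt_of_lt_of_le hr.2 hsτ⟩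
    have hmeas : StronglyMeasurableAtFilter f (nhds r) MeasureTheory.volume := by
      refine ContinuousOn.stronglyMeasurableAtFilter isOpen_Ioo ?_ r hIoo
      exact fun t ht => (hcf t ⟨ht.1.le, ht.2.le⟩).continuousWithinAt
    have h1 : HasDerivAt (fun u => ∫ t in (0 : ℝ)..u, f t) (f r) r :=
      intervalIntegral.integral_hasDerivAt_right (hfint r ⟨hr.1.le, hr.2.le⟩) hmeas
        (hcf r hrτ)
    have h2 := ((hGderiv r hrτ).sub_const (G 0)).const_mul c
    exact h1.sub h2
  have hHanti : AntitoneOn H (Set.Icc 0 s) := by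
    apply antitoneOn_of_deriv_nonpos (convex_Icc 0 s)
    · apply ContinuousOn.sub
      · rw [← Set.uIcc_of_le hs0]
        apply intervalIntegral.continuousOn_primitive_interval
        rw [Set.uIcc_of_le hs0]
        exact hcfIcc.integrableOn_Icc
      · apply ContinuousOn.mul continuousOn_const
        apply ContinuousOn.sub ?_ continuousOn_const
        intro t ht
        exact ((hGderiv t ⟨ht.1, ht.2.trans hsτ⟩).continuousAt).continuousWithinAt
    · rw [interior_Icc]
      intro r hr
      exact ((key r hr).differentiableAt).differentiableWithinAt
    · rw [interior_Icc]
      intro r hr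
      rw [(key r hr).deriv]
      -- show f r ≤ c * (G r * (2 F * (-(deriv x r)/(x r)^2)))
      have hrτ : r ∈ Set.Icc (0 : ℝ) τ := ⟨hr.1.le, hr.2.le.trans hsτ⟩
      have hxr : 0 < x r := hpos r hrτ
      have hd : c₁ ≤ -(deriv x r) := by linarith [hderiv r hrτ]
      have h1 : (1 : ℝ) ≤ -(deriv x r) / c₁ := (one_le_div hc₁).mpr hd
      have hexp : Real.exp (-2 * F * (1 / x s - 1 / x r)) =
          Real.exp (-2 * F * (1 / x s)) * G r := by
        rw [hGdef, ← Real.exp_add]; ring_nf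
      have hABP : 0 ≤ Real.exp (-2 * F * (1 / x s)) * G r / (x r) ^ 2 := by
        rw [hGdef]; positivity
      have hle : f r ≤ c * (G r * (2 * F * (-(deriv x r) / (x r) ^ 2))) := by
        calc f r = Real.exp (-2 * F * (1 / x s)) * G r / (x r) ^ 2 := by
              rw [hfdef]; simp only []; rw [hexp]
          _ ≤ Real.exp (-2 * F * (1 / x s)) * G r / (x r) ^ 2 * (-(deriv x r) / c₁) :=
              le_mul_of_one_le_right hABP h1
          _ = c * (G r * (2 * F * (-(deriv x r) / (x r) ^ 2))) := by
              rw [hcdef]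
              field_simp
      linarith
  have h0mem : (0 : ℝ) ∈ Set.Icc (0 : ℝ) s := ⟨le_rfl, hs0⟩
  have hsmem : s ∈ Set.Icc (0 : ℝ) s := ⟨hs0, le_rfl⟩
  have hHs := hHanti h0mem hsmem hs0
  have hH0 : H 0 = 0 := by
    rw [hHdef]; simp
  rw [hH0] at hHs
  -- hHs : H s ≤ 0, i.e. ∫ ≤ c * (G s - G 0)
  have hG0 : 0 < G 0 := by rw [hGdef]; positivity
  have hfin : c * G s = 1 / (2 * c₁ * F) := by
    rw [hcdef, hGdef]
    rw [div_mul_eq_mul_div, ← Real.exp_add]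
    ring_nf
    rw [Real.exp_zero]
    ring
  have : (∫ t in (0 : ℝ)..s, f t) ≤ c * (G s - G 0) := by
    rw [hHdef] at hHs; simp only [] at hHs; linarith
  have h2 : c * (G s - G 0) ≤ c * G s := by nlinarith [mul_pos hcpos hG0]
  calc (∫ t in (0 : ℝ)..s, Real.exp (-2 * F * (1 / x s - 1 / x t)) / (x t) ^ 2)
      = ∫ t in (0 : ℝ)..s, f t := by rw [hfdef]
    _ ≤ c * (G s - G 0) := this
    _ ≤ c * G s := h2
    _ = 1 / (2 * c₁ * F) := hfin
end
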